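/- Let M be an n×n symmetric positive definite matrix such that its comparison matrix M̄ is positive semidefinite, let d > 0 satisfy M̄ d ≥ 0, and set p := (1/2)(M + M̄)d. Then for every nonempty index set α ⊆ [n], the vector M_{αα}^{-1} p_α is nonnegative. -/

import Mathlib

open Matrix

/-- The comparison matrix of a square matrix. -/
def comparisonMatrix {n : Type*} [DecidableEq n] (M : Matrix n n ℝ) : Matrix n n ℝ :=
  fun i j => if i = j then M i i else -|M i j|

section Aux

variable {ι : Type*} [Fintype ι] [DecidableEq ι]

lemma posDef_diag_pos' {A : Matrix ι ι ℝ} (hA : A.PosDef) (k : ι) : 0 < A k k := by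
  have h := hA.dotProduct_mulVec_pos (x := Pi.single k 1) (by
    intro h
    have := congrFun h k
    simp at this)
  simpa [dotProduct, Pi.single_apply, mul_ite, ite_mul] using h

/-- Core maximum-principle lemma: if `A` is positive definite, `e > 0` and
`|A z| ≤ Ā e` componentwise (Ā the comparison matrix), then `|z| ≤ e`. -/
lemma core_comparison_bound {A : Matrix ι ι ℝ} (hA : A.PosDef)
    (e : ι → ℝ) (he : ∀ i, 0 < e i)
    (z : ι → ℝ)
    (hh : ∀ i, |(A *ᵥ z) i| ≤ (comparisonMatrix A *ᵥ e) i) :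
    ∀ i, |z i| ≤ e i := by
  classical
  by_contra hcon
  push_neg at hcon
  obtain ⟨i0, hi0⟩ := hcon
  haveI : Nonempty ι := ⟨i0⟩
  have hne : (Finset.univ : Finset ι).Nonempty := Finset.univ_nonempty
  set f : ι → ℝ := fun i => |z i| / e i with hf
  set t : ℝ := Finset.univ.sup' hne f with htdef
  have ht : ∀ i, |z i| ≤ t * e i := by
    intro i
    have h1 : f i ≤ t := Finset.le_sup' f (Finset.mem_univ i)
    have := (div_le_iff₀ (he i)).mp h1
    linarith
  have ht1 : 1 < t := by
    have h1 : f i0 ≤ t := Finset.le_sup' f (Finset.mem_univ i0)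
    have h2 : 1 < f i0 := (one_lt_div (he i0)).mpr hi0
    linarith
  have key : ∀ k, |z k| = t * e k →
      (comparisonMatrix A *ᵥ e) k = 0 ∧ ∀ j, j ≠ k → A k j = 0 ∨ |z j| = t * e j := by
    intro k hk
    have hKpos : 0 < A k k := posDef_diag_pos' hA k
    set s : Finset ι := Finset.univ.erase k with hs
    set S1 : ℝ := ∑ j ∈ s, |A k j| * e j with hS1def
    set S2 : ℝ := ∑ j ∈ s, |A k j| * |z j| with hS2def
    have hbar : (comparisonMatrix A *ᵥ e) k = A k k * e k - S1 := by
      have hterm : ∀ j ∈ s, (if k = j then A k k else -|A k j|) * e j = -(|A k j| * e j) := by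
        intro j hj
        rw [if_neg (fun h => (Finset.mem_erase.mp hj).1 h.symm)]
        ring
      simp only [mulVec, dotProduct, comparisonMatrix]
      rw [← Finset.sum_erase_add _ _ (Finset.mem_univ k), Finset.sum_congr rfl hterm,
        Finset.sum_neg_distrib, if_pos rfl]
      rw [hS1def]
      ring
    have hAz : (A *ᵥ z) k = A k k * z k + ∑ j ∈ s, A k j * z j := by
      simp only [mulVec, dotProduct]
      rw [← Finset.sum_erase_add _ _ (Finset.mem_univ k)]
      ring
    have h3 : |∑ j ∈ s, A k j * z j| ≤ S2 := by
      refine (Finset.abs_sum_le_sum_abs _ _).trans (le_of_eq ?_)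
      rw [hS2def]
      exact Finset.sum_congr rfl fun j _ => abs_mul _ _
    have hS1mul : t * S1 = ∑ j ∈ s, |A k j| * (t * e j) := by
      rw [hS1def, Finset.mul_sum]
      exact Finset.sum_congr rfl fun j _ => by ring
    have h4 : S2 ≤ t * S1 := by
      rw [hS2def, hS1mul]
      exact Finset.sum_le_sum fun j _ => mul_le_mul_of_nonneg_left (ht j) (abs_nonneg _)
    have h5 : |(A *ᵥ z) k| ≤ A k k * e k - S1 := by rw [← hbar]; exact hh k
    have h6 : (0:ℝ) ≤ A k k * e k - S1 := le_trans (abs_nonneg _) h5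
    have h7 : A k k * (t * e k) ≤ |(A *ᵥ z) k| + S2 := by
      have e1 : A k k * z k = (A *ᵥ z) k - ∑ j ∈ s, A k j * z j := by rw [hAz]; ring
      have e2 : A k k * (t * e k) = |A k k * z k| := by
        rw [abs_mul, abs_of_pos hKpos, hk]
      rw [e2, e1]
      calc |(A *ᵥ z) k - ∑ j ∈ s, A k j * z j|
          ≤ |(A *ᵥ z) k| + |∑ j ∈ s, A k j * z j| := abs_sub _ _
        _ ≤ |(A *ᵥ z) k| + S2 := by linarith
    have hzero : A k k * e k - S1 = 0 := by nlinarith [h7, h5, h4, h6, ht1]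
    have hS2eq : S2 = t * S1 := by nlinarith [h7, h5, h4, hzero, abs_nonneg ((A *ᵥ z) k), ht1]
    have hterm0 : ∀ j ∈ s, |A k j| * (t * e j - |z j|) = 0 := by
      have hsum : ∑ j ∈ s, |A k j| * (t * e j - |z j|) = 0 := by
        have hexp : ∑ j ∈ s, |A k j| * (t * e j - |z j|)
            = (∑ j ∈ s, |A k j| * (t * e j)) - S2 := by
          rw [hS2def, ← Finset.sum_sub_distrib]
          exact Finset.sum_congr rfl fun j _ => by ring
        rw [hexp, ← hS1mul, hS2eq]
        ring
      have hnn : ∀ j ∈ s, 0 ≤ |A k j| * (t * e j - |z j|) := fun j _ =>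
        mul_nonneg (abs_nonneg _) (by linarith [ht j])
      exact fun j hj => (Finset.sum_eq_zero_iff_of_nonneg hnn).mp hsum j hj
    refine ⟨by rw [hbar]; exact hzero, fun j hj => ?_⟩
    rcases mul_eq_zero.mp (hterm0 j (Finset.mem_erase.mpr ⟨hj, Finset.mem_univ j⟩)) with h | h
    · exact Or.inl (abs_eq_zero.mp h)
    · exact Or.inr (by linarith)
  obtain ⟨k0, _, hk0⟩ := Finset.exists_mem_eq_sup' hne f
  have hk0' : |z k0| = t * e k0 := by
    have h1 : t = |z k0| / e k0 := hk0
    rw [h1, div_mul_cancel₀ _ (he k0).ne']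
  set ζ : ι → ℝ := fun i => if |z i| = t * e i then z i else 0 with hζ
  have hζk0 : ζ k0 = z k0 := if_pos hk0'
  have hzk0ne : z k0 ≠ 0 := by
    intro h
    rw [h, abs_zero] at hk0'
    nlinarith [he k0, ht1]
  have hζne : ζ ≠ 0 := fun h => hzk0ne (by rw [← hζk0, h]; rfl)
  have hmv : ∀ i, |z i| = t * e i → (A *ᵥ ζ) i = 0 := by
    intro i hi
    have h1 : (A *ᵥ ζ) i = (A *ᵥ z) i := by
      simp only [mulVec, dotProduct]
      refine Finset.sum_congr rfl fun j _ => ?_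
      by_cases hj : |z j| = t * e j
      · rw [hζ]; simp [hj]
      · have hji : j ≠ i := fun h => hj (h ▸ hi)
        have hzero : A i j = 0 := by
          rcases (key i hi).2 j hji with h | h
          · exact h
          · exact absurd h hj
        rw [hzero]
        simp
    rw [h1]
    have h2 : |(A *ᵥ z) i| ≤ 0 := by
      have := hh i
      rw [(key i hi).1] at this
      exact this
    exact abs_nonpos_iff.mp h2
  have hquad : ζ ⬝ᵥ (A *ᵥ ζ) = 0 := by
    simp only [dotProduct]
    refine Finset.sum_eq_zero fun i _ => ?_
    by_cases hi : |z i| = t * e i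
    · rw [hmv i hi, mul_zero]
    · rw [hζ]; simp [hi]
  have hpos := hA.dotProduct_mulVec_pos hζne
  have hstar : star ζ = ζ := by
    funext i
    simp
  rw [hstar, hquad] at hpos
  exact lt_irrefl 0 hpos

lemma posDef_submatrix' {N : Matrix ι ι ℝ} (h : N.PosDef) (α : Finset ι) :
    (N.submatrix (Subtype.val : {x // x ∈ α} → ι) Subtype.val).PosDef := by
  classical
  refine PosDef.of_dotProduct_mulVec_pos (h.1.submatrix _) fun x hx => ?_
  set y : ι → ℝ := fun i => if hi : i ∈ α then x ⟨i, hi⟩ else 0 with hy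
  have hyval : ∀ a : {x // x ∈ α}, y a.val = x a := fun a => by
    rw [hy]
    simp
  have hyne : y ≠ 0 := by
    obtain ⟨a, ha⟩ := Function.ne_iff.mp hx
    refine Function.ne_iff.mpr ⟨a.val, ?_⟩
    rw [hyval a]
    exact ha
  have hinner : ∀ i, (N *ᵥ y) i = ∑ b : {x // x ∈ α}, N i b.val * x b := by
    intro i
    simp only [mulVec, dotProduct]
    rw [← Finset.sum_subset (Finset.subset_univ α) (fun j _ hj => by
      rw [hy]; simp [hj])]
    rw [← Finset.sum_coe_sort α (fun j => N i j * y j)]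
    exact Finset.sum_congr rfl fun b _ => by rw [hyval b]
  have hmain : star y ⬝ᵥ (N *ᵥ y)
      = star x ⬝ᵥ ((N.submatrix (Subtype.val : {x // x ∈ α} → ι) Subtype.val) *ᵥ x) := by
    simp only [dotProduct, Pi.star_apply, star_trivial]
    rw [← Finset.sum_subset (Finset.subset_univ α) (fun j _ hj => by
      rw [hy]; simp [hj])]
    rw [← Finset.sum_coe_sort α (fun j => y j * (N *ᵥ y) j)]
    refine Finset.sum_congr rfl fun b _ => ?_
    rw [hyval b, hinner b.val]
    simp only [mulVec, dotProduct, submatrix_apply]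
  rw [← hmain]
  exact h.dotProduct_mulVec_pos hyne

end Aux

theorem inv_submatrix_p_nonneg
    {n : ℕ} (M : Matrix (Fin n) (Fin n) ℝ) (hpd : M.PosDef)
    (hcmp : (comparisonMatrix M).PosSemidef)
    (d : Fin n → ℝ) (hd : ∀ i, 0 < d i)
    (hMd : ∀ i, 0 ≤ (comparisonMatrix M).mulVec d i)
    (p : Fin n → ℝ)
    (hp : p = fun i => (1 / 2) * (M.mulVec d i + (comparisonMatrix M).mulVec d i))
    (α : Finset (Fin n)) (hα : α.Nonempty) :
    ∀ a : {x // x ∈ α},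
      0 ≤ ((M.submatrix (Subtype.val : {x // x ∈ α} → Fin n)
            (Subtype.val : {x // x ∈ α} → Fin n))⁻¹).mulVec
          (fun b : {x // x ∈ α} => p (b : Fin n)) a := by
  classical
  intro a
  set A := M.submatrix (Subtype.val : {x // x ∈ α} → Fin n)
      (Subtype.val : {x // x ∈ α} → Fin n) with hAdef
  have hApd : A.PosDef := posDef_submatrix' hpd α
  set q : {x // x ∈ α} → ℝ := fun b : {x // x ∈ α} => p (b : Fin n) with hqdef
  set x : {x // x ∈ α} → ℝ := A⁻¹ *ᵥ q with hxdef
  show 0 ≤ x a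
  have hdet : IsUnit A.det := hApd.det_pos.ne'.isUnit
  have hAx : A *ᵥ x = q := by
    rw [hxdef, mulVec_mulVec, mul_nonsing_inv _ hdet, one_mulVec]
  set e : {x // x ∈ α} → ℝ := fun b => d b.val with hedef
  set z : {x // x ∈ α} → ℝ := fun b => 2 * x b - e b with hzdef
  have hcompsub : comparisonMatrix A
      = (comparisonMatrix M).submatrix (Subtype.val : {x // x ∈ α} → Fin n) Subtype.val := by
    ext i j
    simp only [comparisonMatrix, submatrix_apply, hAdef]
    by_cases hij : i = j
    · subst hij; simp
    · rw [if_neg hij, if_neg fun h => hij (Subtype.ext h)]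
  have hsplit : ∀ b : {x // x ∈ α}, (M *ᵥ d) b.val
      = (A *ᵥ e) b + ∑ j ∈ αᶜ, M b.val j * d j := by
    intro b
    have h1 : (A *ᵥ e) b = ∑ j ∈ α, M b.val j * d j := by
      simp only [mulVec, dotProduct, hAdef, submatrix_apply, hedef]
      exact Finset.sum_coe_sort α (fun j => M b.val j * d j)
    rw [h1]
    simp only [mulVec, dotProduct]
    exact (Finset.sum_add_sum_compl α _).symm
  have hsplitbar : ∀ b : {x // x ∈ α}, (comparisonMatrix M *ᵥ d) b.val
      = (comparisonMatrix A *ᵥ e) b + ∑ j ∈ αᶜ, (comparisonMatrix M) b.val j * d j := by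
    intro b
    have h1 : (comparisonMatrix A *ᵥ e) b
        = ∑ j ∈ α, (comparisonMatrix M) b.val j * d j := by
      simp only [mulVec, dotProduct, hcompsub, submatrix_apply, hedef]
      exact Finset.sum_coe_sort α (fun j => (comparisonMatrix M) b.val j * d j)
    rw [h1]
    simp only [mulVec, dotProduct]
    exact (Finset.sum_add_sum_compl α _).symm
  have hcomp_off : ∀ (b : {x // x ∈ α}) (j : Fin n), j ∈ αᶜ →
      (comparisonMatrix M) b.val j = -|M b.val j| := by
    intro b j hj
    have hbj : b.val ≠ j := fun h => (Finset.mem_compl.mp hj) (h ▸ b.2)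
    simp [comparisonMatrix, hbj]
  have hAz : ∀ b : {x // x ∈ α}, (A *ᵥ z) b = 2 * q b - (A *ᵥ e) b := by
    intro b
    have h1 : (A *ᵥ z) b = 2 * (A *ᵥ x) b - (A *ᵥ e) b := by
      simp only [mulVec, dotProduct, hzdef]
      rw [Finset.mul_sum, ← Finset.sum_sub_distrib]
      exact Finset.sum_congr rfl fun c _ => by ring
    rw [h1, hAx]
  have hbound : ∀ b : {x // x ∈ α}, |(A *ᵥ z) b| ≤ (comparisonMatrix A *ᵥ e) b := by
    intro b
    have hc2 : |∑ j ∈ αᶜ, M b.val j * d j| ≤ ∑ j ∈ αᶜ, |M b.val j| * d j := by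
      refine (Finset.abs_sum_le_sum_abs _ _).trans (le_of_eq ?_)
      exact Finset.sum_congr rfl fun j _ => by rw [abs_mul, abs_of_pos (hd j)]
    have hAeb : (comparisonMatrix A *ᵥ e) b
        = (comparisonMatrix M *ᵥ d) b.val + ∑ j ∈ αᶜ, |M b.val j| * d j := by
      rw [hsplitbar b]
      have h2 : ∑ j ∈ αᶜ, (comparisonMatrix M) b.val j * d j
          = -∑ j ∈ αᶜ, |M b.val j| * d j := by
        rw [← Finset.sum_neg_distrib]
        exact Finset.sum_congr rfl fun j hj => by rw [hcomp_off b j hj]; ring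
      rw [h2]; ring
    have h2 : q b = 1 / 2 * ((M *ᵥ d) b.val + (comparisonMatrix M *ᵥ d) b.val) := by
      rw [hqdef]
      simp only [hp]
    have hAzb : (A *ᵥ z) b
        = (comparisonMatrix M *ᵥ d) b.val + ∑ j ∈ αᶜ, M b.val j * d j := by
      have h3 := hsplit b
      rw [hAz b, h2]
      linarith
    rw [hAzb, hAeb]
    have h0 := hMd b.val
    calc |(comparisonMatrix M *ᵥ d) b.val + ∑ j ∈ αᶜ, M b.val j * d j|
        ≤ |(comparisonMatrix M *ᵥ d) b.val| + |∑ j ∈ αᶜ, M b.val j * d j| := abs_add_le _ _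
      _ ≤ (comparisonMatrix M *ᵥ d) b.val + ∑ j ∈ αᶜ, |M b.val j| * d j := by
          rw [abs_of_nonneg h0]; linarith
  have hcore := core_comparison_bound hApd e (fun b => hd b.val) z hbound
  have habs := abs_le.mp (hcore a)
  have hza : z a = 2 * x a - e a := by rw [hzdef]
  have h1 := habs.1
  rw [hza] at h1
  linarith
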